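/- Let R be a commutative ring and F a flat R-module. Then F is cotorsion (equivalently: for every pure embedding f : A → B with A and B flat R-modules and every R-homomorphism g : A → F there is an R-homomorphism h : B → F with h ∘ f = g) if and only if for every pure embedding f : A → B with A and B flat R-modules of cardinality at most κ and every R-homomorphism g : A → F, there is an R-homomorphism h : B → F such that h ∘ f = g. -/

import Mathlib

universe u

/-- `A` is a pure submodule of its ambient module: every finite system of
`R`-linear equations `∑ j, r i j • x j = a i` with constants `a i ∈ A` that has
a solution in the ambient module has a solution in `A`. -/
def IsPureSubmodule {R : Type*} [Ring R] {M : Type*} [AddCommGroup M] [Module R M]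
    (A : Submodule R M) : Prop :=
  ∀ (m n : ℕ) (r : Fin m → Fin n → R) (a : Fin m → M),
    (∀ i, a i ∈ A) →
    (∃ x : Fin n → M, ∀ i, (∑ j, r i j • x j) = a i) →
    ∃ x : Fin n → M, (∀ j, x j ∈ A) ∧ ∀ i, (∑ j, r i j • x j) = a i

/-- A pure embedding is an injective linear map whose image is a pure submodule
of its codomain. -/
def IsPureEmbedding {R : Type*} [Ring R] {M N : Type*} [AddCommGroup M] [Module R M]
    [AddCommGroup N] [Module R N] (f : M →ₗ[R] N) : Prop :=
  Function.Injective f ∧ IsPureSubmodule (LinearMap.range f)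

/-- `F` is injective relative to pure embeddings between flat modules; for flat
`F` this says exactly that `F` is cotorsion. -/
def FlatCotorsion (R : Type u) [CommRing R] (F : Type u) [AddCommGroup F] [Module R F] : Prop :=
  ∀ (A B : Type u) [AddCommGroup A] [Module R A] [AddCommGroup B] [Module R B],
    Module.Flat R A → Module.Flat R B →
    ∀ f : A →ₗ[R] B, IsPureEmbedding f →
    ∀ g : A →ₗ[R] F, ∃ h : B →ₗ[R] F, h.comp f = g

open Cardinal Submodule

section Card

lemma mk_fin_fun_le {X : Type u} {c : Cardinal.{u}} (hc : ℵ₀ ≤ c) (hX : #X ≤ c) (m : ℕ) :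
    #(Fin m → X) ≤ c := by
  induction m with
  | zero =>
      exact le_trans Cardinal.mk_le_aleph0 hc
  | succ m ih =>
      have e : (Fin (m+1) → X) ≃ X × (Fin m → X) := (Fin.consEquiv fun _ : Fin (m+1) => X).symm
      rw [Cardinal.mk_congr e, Cardinal.mk_prod, Cardinal.lift_id, Cardinal.lift_id]
      calc #X * #(Fin m → X) ≤ max (max #X #(Fin m → X)) ℵ₀ := Cardinal.mul_le_max _ _
        _ ≤ c := by
          refine max_le (max_le hX ih) hc

lemma mk_finsupp_le {α : Type u} (R : Type u) [Zero R] :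
    #(α →₀ R) ≤ max (max #α #R) ℵ₀ := by
  cases finite_or_infinite α with
  | inl h =>
      have : Fintype α := Fintype.ofFinite α
      rw [Cardinal.mk_finsupp_lift_of_fintype, Cardinal.lift_id]
      calc #R ^ Fintype.card α ≤ (max (max #α #R) ℵ₀) ^ Fintype.card α := by
            apply Cardinal.power_le_power_right
            exact le_max_of_le_left (le_max_right _ _)
        _ ≤ max (max #α #R) ℵ₀ := Cardinal.power_nat_le (le_max_right _ _)
  | inr h =>
      rcases subsingleton_or_nontrivial R with hR | hR
      · have : Subsingleton (α →₀ R) :=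
          ⟨fun a b => Finsupp.ext fun x => Subsingleton.elim _ _⟩
        exact le_trans Cardinal.mk_le_aleph0 (le_max_right _ _)
      · rw [Cardinal.mk_finsupp_of_infinite]
        exact le_max_of_le_left (max_le_max (le_refl _) (le_refl _))

lemma mk_span_le {R : Type u} [CommRing R] {B : Type u} [AddCommGroup B] [Module R B]
    (s : Set B) : #(span R s) ≤ max (max #s #R) ℵ₀ := by
  have hrange : LinearMap.range (Finsupp.linearCombination R (Subtype.val : s → B)) =
      span R s := by
    rw [Finsupp.range_linearCombination, Subtype.range_coe]
  have hsurj : Function.Surjective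
      (fun p : (s →₀ R) => (⟨Finsupp.linearCombination R (Subtype.val : s → B) p,
        hrange ▸ LinearMap.mem_range_self _ p⟩ : span R s)) := by
    rintro ⟨x, hx⟩
    rw [← hrange] at hx
    obtain ⟨p, hp⟩ := hx
    exact ⟨p, by simp [hp]⟩
  calc #(span R s) ≤ #(s →₀ R) := Cardinal.mk_le_of_surjective hsurj
    _ ≤ max (max #s #R) ℵ₀ := mk_finsupp_le R

end Card

open Cardinal Submodule

section Pure

variable {R : Type u} [CommRing R] {B : Type u} [AddCommGroup B] [Module R B]

/-- coercion of sums commute -/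
lemma coe_sum_smul {Q : Submodule R B} {ι : Type*} [Fintype ι] (r : ι → R) (x : ι → Q) :
    ((∑ j, r j • x j : Q) : B) = ∑ j, r j • (x j : B) := by
  simp

/-- a pure submodule of a flat module is flat -/
lemma flat_of_pure [Module.Flat R B] (A : Submodule R B) (hA : IsPureSubmodule A) :
    Module.Flat R A := by
  apply Module.Flat.of_forall_isTrivialRelation
  intro l f x hfx
  let ι := Fin l
  -- the relation holds in B
  have hfxB : ∑ i, f i • ((x i : B)) = 0 := by
    have := congrArg (A.subtype) hfx
    simpa using this
  obtain ⟨k, a, y, hy1', hy2⟩ :=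
    Module.Flat.isTrivialRelation_of_sum_smul_eq_zero (M := B) hfxB
  let κty := Fin k
  have hy1 : ∀ i, ((x i : B)) = ∑ j, a i j • y j := hy1'
  classical
  set m := Fintype.card ι
  set n := Fintype.card κty
  set e : ι ≃ Fin m := Fintype.equivFin ι
  set eκ : κty ≃ Fin n := Fintype.equivFin κty
  -- apply purity to the system x i = ∑ j a i j • y j
  obtain ⟨x', hx'mem, hx'⟩ := hA m n (fun i j => a (e.symm i) (eκ.symm j))
      (fun i => (x (e.symm i) : B)) (fun i => (x (e.symm i)).2)
      ⟨fun j => y (eκ.symm j), by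
        intro i
        show ∑ j, a (e.symm i) (eκ.symm j) • y (eκ.symm j) = ((x (e.symm i) : B))
        rw [hy1 (e.symm i)]
        exact Fintype.sum_equiv eκ.symm _ _ (fun j => rfl)⟩
  refine ⟨n, fun i j => a i (eκ.symm j),
    fun j => ⟨x' j, hx'mem j⟩, ?_, ?_⟩
  · intro i
    apply Subtype.ext
    show ((x i : B)) = ((∑ j : Fin n,
      a i (eκ.symm j) • (⟨x' j, hx'mem j⟩ : A) : A) : B)
    rw [coe_sum_smul]
    have := hx' (e i)
    simp only [Equiv.symm_apply_apply] at this
    rw [← this]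
  · intro j
    have := hy2 (eκ.symm j)
    simpa using this

/-- purity passes to directed suprema -/
lemma isPureSubmodule_iSup {ι : Type*} [Nonempty ι] {p : ι → Submodule R B}
    (hd : Directed (· ≤ ·) p) (hp : ∀ i, IsPureSubmodule (p i)) :
    IsPureSubmodule (⨆ i, p i) := by
  classical
  intro m n r a ha hsol
  choose idx hidx using fun i => (Submodule.mem_iSup_of_directed p hd).1 (ha i)
  obtain ⟨i₀, hi₀⟩ := hd.finset_le (Finset.image idx Finset.univ)
  obtain ⟨x, hxmem, hx⟩ := hp i₀ m n r a
    (fun i => hi₀ (idx i) (Finset.mem_image_of_mem idx (Finset.mem_univ i)) (hidx i)) hsol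
  exact ⟨x, fun j => (le_iSup p i₀) (hxmem j), hx⟩

/-- if `P ≤ Q ≤ B` and `P` is pure in `B`, then the inclusion `P → Q` is a pure embedding -/
lemma isPureEmbedding_inclusion {P Q : Submodule R B} (hPQ : P ≤ Q) (hP : IsPureSubmodule P) :
    IsPureEmbedding (Submodule.inclusion hPQ) := by
  refine ⟨Submodule.inclusion_injective hPQ, ?_⟩
  intro m n r a ha ⟨x, hx⟩
  have haP : ∀ i, ((a i : B)) ∈ P := by
    intro i
    obtain ⟨⟨z, hz⟩, hz'⟩ := ha i
    rw [← hz']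
    exact hz
  have hxB : ∀ i, (∑ j, r i j • ((x j : B))) = (a i : B) := by
    intro i
    rw [← coe_sum_smul, hx i]
  obtain ⟨x', hx'mem, hx'⟩ := hP m n r (fun i => (a i : B)) haP ⟨fun j => (x j : B), hxB⟩
  refine ⟨fun j => ⟨x' j, hPQ (hx'mem j)⟩, fun j => ⟨⟨x' j, hx'mem j⟩, rfl⟩, ?_⟩
  intro i
  apply Subtype.ext
  rw [coe_sum_smul]
  exact hx' i

end Pure

section Construction

attribute [local instance] Classical.propDecidable

variable {R : Type u} [CommRing R] {B : Type u} [AddCommGroup B] [Module R B]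

/-- A finite system of linear equations with constants in `D`. -/
structure Sys (D : Submodule R B) : Type u where
  m : ℕ
  n : ℕ
  r : Fin m → Fin n → R
  a : Fin m → B
  ha : ∀ i, a i ∈ D

variable {C : Submodule R B}

noncomputable def sol1 {D : Submodule R B} (w : Sys D) : Fin w.n → B :=
  if h : ∃ x : Fin w.n → B, ∀ i, ∑ j, w.r i j • x j = w.a i then h.choose else 0

noncomputable def sol2 (hC : IsPureSubmodule C) {D : Submodule R B} (w : Sys D) : Fin w.n → B :=
  if h : (∀ i, w.a i ∈ C) ∧ ∃ x : Fin w.n → B, ∀ i, ∑ j, w.r i j • x j = w.a i then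
    (hC w.m w.n w.r w.a h.1 h.2).choose else 0

noncomputable def sol3 (C : Submodule R B) {D : Submodule R B} (w : Sys D) : Fin w.n → B :=
  if h : ∃ x : Fin w.n → B, ∃ c : Fin w.m → B, (∀ i, c i ∈ C) ∧
      ∀ i, ∑ j, w.r i j • x j = w.a i + c i then h.choose else 0

noncomputable def witFun1 {D : Submodule R B} (p : Sys D × ULift.{u} ℕ) : B :=
  if h : p.2.down < p.1.n then sol1 p.1 ⟨p.2.down, h⟩ else 0

noncomputable def witFun2 (hC : IsPureSubmodule C) {D : Submodule R B}
    (p : Sys D × ULift.{u} ℕ) : B :=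
  if h : p.2.down < p.1.n then sol2 hC p.1 ⟨p.2.down, h⟩ else 0

noncomputable def witFun3 (C : Submodule R B) {D : Submodule R B} (p : Sys D × ULift.{u} ℕ) : B :=
  if h : p.2.down < p.1.n then sol3 C p.1 ⟨p.2.down, h⟩ else 0

noncomputable def witSet (hC : IsPureSubmodule C) (D : Submodule R B) : Set B :=
  (Set.range (witFun1 (D := D)) ∪ Set.range (witFun2 hC (D := D))) ∪
    Set.range (witFun3 C (D := D))

noncomputable def stepSub (hC : IsPureSubmodule C) (D : Submodule R B) : Submodule R B :=
  span R ((D : Set B) ∪ witSet hC D)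

lemma le_stepSub (hC : IsPureSubmodule C) (D : Submodule R B) : D ≤ stepSub hC D :=
  fun _ hx => subset_span (Or.inl hx)

lemma sol1_mem_stepSub (hC : IsPureSubmodule C) {D : Submodule R B} (w : Sys D) (j : Fin w.n) :
    sol1 w j ∈ stepSub hC D := by
  apply subset_span
  refine Or.inr (Or.inl (Or.inl ⟨(w, ⟨(j : ℕ)⟩), ?_⟩))
  simp [witFun1, j.isLt]

lemma sol2_mem_stepSub (hC : IsPureSubmodule C) {D : Submodule R B} (w : Sys D) (j : Fin w.n) :
    sol2 hC w j ∈ stepSub hC D := by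
  apply subset_span
  refine Or.inr (Or.inl (Or.inr ⟨(w, ⟨(j : ℕ)⟩), ?_⟩))
  simp [witFun2, j.isLt]

lemma sol3_mem_stepSub (hC : IsPureSubmodule C) {D : Submodule R B} (w : Sys D) (j : Fin w.n) :
    sol3 C w j ∈ stepSub hC D := by
  apply subset_span
  refine Or.inr (Or.inr ⟨(w, ⟨(j : ℕ)⟩), ?_⟩)
  simp [witFun3, j.isLt]

lemma mk_sys_le (D : Submodule R B) (hD : #D ≤ max #R ℵ₀) :
    #(Sys D) ≤ max #R ℵ₀ := by
  set κ := max #R ℵ₀ with hκdef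
  have hκ : ℵ₀ ≤ κ := le_max_right _ _
  have hRκ : #R ≤ κ := le_max_left _ _
  -- inject into a sigma type
  set T := Σ p : ULift.{u} (ℕ × ℕ), ((Fin p.down.1 → Fin p.down.2 → R) × (Fin p.down.1 → D))
  have hinj : Function.Injective (fun w : Sys D =>
      (⟨⟨(w.m, w.n)⟩, (w.r, fun i => ⟨w.a i, w.ha i⟩)⟩ : T)) := by
    rintro ⟨m1, n1, r1, a1, ha1⟩ ⟨m2, n2, r2, a2, ha2⟩ h
    simp only at h
    rcases Sigma.mk.inj_iff.mp h with ⟨hp, hrest⟩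
    obtain ⟨hm, hn⟩ : m1 = m2 ∧ n1 = n2 := by
      constructor <;> [exact congrArg (fun q => q.down.1) hp; exact congrArg (fun q => q.down.2) hp]
    subst hm; subst hn
    have hpair := eq_of_heq hrest
    have hr : r1 = r2 := congrArg Prod.fst hpair
    have hfa := congrArg Prod.snd hpair
    have haa : a1 = a2 := by
      funext i
      exact congrArg Subtype.val (congrFun hfa i)
    subst hr; subst haa; rfl
  have hT : #T ≤ κ := by
    calc #T = Cardinal.sum fun p : ULift.{u} (ℕ × ℕ) =>
        #((Fin p.down.1 → Fin p.down.2 → R) × (Fin p.down.1 → D)) := Cardinal.mk_sigma _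
      _ ≤ Cardinal.sum fun _ : ULift.{u} (ℕ × ℕ) => κ := by
          apply Cardinal.sum_le_sum
          intro p
          rw [Cardinal.mk_prod, Cardinal.lift_id, Cardinal.lift_id]
          have h1 : #(Fin p.down.1 → Fin p.down.2 → R) ≤ κ :=
            mk_fin_fun_le hκ (mk_fin_fun_le hκ hRκ _) _
          have h2 : #(Fin p.down.1 → D) ≤ κ := mk_fin_fun_le hκ hD _
          calc _ ≤ max (max #(Fin p.down.1 → Fin p.down.2 → R) #(Fin p.down.1 → D)) ℵ₀ :=
                Cardinal.mul_le_max _ _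
            _ ≤ κ := max_le (max_le h1 h2) hκ
      _ = #(ULift.{u} (ℕ × ℕ)) * κ := Cardinal.sum_const' _ _
      _ ≤ ℵ₀ * κ := by
          apply mul_le_mul' Cardinal.mk_le_aleph0 le_rfl
      _ ≤ max (max ℵ₀ κ) ℵ₀ := Cardinal.mul_le_max _ _
      _ ≤ κ := max_le (max_le hκ le_rfl) hκ
  exact le_trans (Cardinal.mk_le_of_injective hinj) hT

lemma mk_stepSub_le (hC : IsPureSubmodule C) (D : Submodule R B) (hD : #D ≤ max #R ℵ₀) :
    #(stepSub hC D) ≤ max #R ℵ₀ := by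
  set κ := max #R ℵ₀ with hκdef
  have hκ : ℵ₀ ≤ κ := le_max_right _ _
  have hprod : #(Sys D × ULift.{u} ℕ) ≤ κ := by
    rw [Cardinal.mk_prod, Cardinal.lift_id, Cardinal.lift_id]
    calc _ ≤ max (max #(Sys D) #(ULift.{u} ℕ)) ℵ₀ := Cardinal.mul_le_max _ _
      _ ≤ κ := max_le (max_le (mk_sys_le D hD) (le_trans Cardinal.mk_le_aleph0 hκ)) hκ
  have hwit : #(witSet hC D) ≤ κ := by
    refine le_trans (Cardinal.mk_union_le _ _) ?_
    apply Cardinal.add_le_of_le hκ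
    · refine le_trans (Cardinal.mk_union_le _ _) ?_
      exact Cardinal.add_le_of_le hκ (le_trans Cardinal.mk_range_le hprod)
        (le_trans Cardinal.mk_range_le hprod)
    · exact le_trans Cardinal.mk_range_le hprod
  have hset : #((D : Set B) ∪ witSet hC D : Set B) ≤ κ := by
    refine le_trans (Cardinal.mk_union_le _ _) ?_
    exact Cardinal.add_le_of_le hκ (by rw [SetLike.coe_sort_coe]; exact hD) hwit
  refine le_trans (mk_span_le _) ?_
  exact max_le (max_le (le_trans hset le_rfl) (le_max_left _ _)) hκ

/-- The key construction: given a pure submodule `C` of `B` and an element `b₀`,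
there is a submodule `D` of cardinality at most `κ` containing `b₀` such that
`D`, `C ⊓ D` and `C ⊔ D` are all pure in `B`. -/
lemma exists_pure_cover (hC : IsPureSubmodule C) (b₀ : B) :
    ∃ D : Submodule R B, b₀ ∈ D ∧ #D ≤ max #R ℵ₀ ∧ IsPureSubmodule D ∧
      IsPureSubmodule (C ⊓ D) ∧ IsPureSubmodule (C ⊔ D) := by
  classical
  set κ := max #R ℵ₀ with hκdef
  have hκ : ℵ₀ ≤ κ := le_max_right _ _
  -- the chain of approximations
  let Dseq : ℕ → Submodule R B := fun k => Nat.rec (span R {b₀}) (fun _ Dk => stepSub hC Dk) k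
  have hsucc : ∀ k, Dseq (k + 1) = stepSub hC (Dseq k) := fun k => rfl
  have hmono : Monotone Dseq := monotone_nat_of_le_succ (fun k => le_stepSub hC (Dseq k))
  let Dch : ℕ →o Submodule R B := ⟨Dseq, hmono⟩
  refine ⟨⨆ k, Dseq k, ?_, ?_, ?_, ?_, ?_⟩
  · exact le_iSup Dseq 0 (subset_span rfl)
  · -- cardinality
    have hcard : ∀ k, #(↥(Dseq k)) ≤ κ := by
      intro k
      induction k with
      | zero =>
          refine le_trans (mk_span_le _) (max_le (max_le ?_ (le_max_left _ _)) hκ)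
          exact le_trans Cardinal.mk_le_aleph0 hκ
      | succ k ih => exact mk_stepSub_le hC (Dseq k) ih
    have hcoe : ((⨆ k, Dseq k : Submodule R B) : Set B) = ⋃ k : ℕ, SetLike.coe (Dseq k) := by
      have := Submodule.coe_iSup_of_chain Dch
      exact this
    have hcoe' : ((⨆ k, Dseq k : Submodule R B) : Set B) =
        ⋃ k : ULift.{u} ℕ, SetLike.coe (Dseq k.down) := by
      rw [hcoe]; ext x; simp only [Set.mem_iUnion]
      exact ⟨fun ⟨k, hk⟩ => ⟨⟨k⟩, hk⟩, fun ⟨k, hk⟩ => ⟨k.down, hk⟩⟩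
    rw [← SetLike.coe_sort_coe, hcoe']
    refine le_trans (Cardinal.mk_iUnion_le _) ?_
    have h1 : #(ULift.{u} ℕ) ≤ κ := le_trans Cardinal.mk_le_aleph0 hκ
    have h2 : ⨆ k : ULift.{u} ℕ, #(SetLike.coe (Dseq k.down)) ≤ κ := by
      refine ciSup_le' ?_
      intro k
      rw [SetLike.coe_sort_coe]
      exact hcard k.down
    calc _ ≤ κ * κ := mul_le_mul' h1 h2
      _ ≤ max (max κ κ) ℵ₀ := Cardinal.mul_le_max _ _
      _ ≤ κ := max_le (max_le le_rfl le_rfl) hκ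
  · -- D is pure
    intro m n r a ha hsol
    have hlev : ∃ N, ∀ i, a i ∈ Dseq N := by
      choose idx hidx using fun i => (Submodule.mem_iSup_of_chain Dch (a i)).1 (ha i)
      exact ⟨Finset.univ.sup idx, fun i =>
        hmono (Finset.le_sup (Finset.mem_univ i)) (hidx i)⟩
    obtain ⟨N, hN⟩ := hlev
    set w : Sys (Dseq N) := ⟨m, n, r, a, hN⟩ with hw
    have hcond : ∃ x : Fin w.n → B, ∀ i, ∑ j, w.r i j • x j = w.a i := hsol
    have hspec : ∀ i, ∑ j, w.r i j • sol1 w j = w.a i := by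
      rw [sol1, dif_pos hcond]; exact hcond.choose_spec
    refine ⟨sol1 w, fun j => le_iSup Dseq (N + 1) ?_, hspec⟩
    rw [hsucc N]
    exact sol1_mem_stepSub hC w j
  · -- C ⊓ D is pure
    intro m n r a ha hsol
    have hlev : ∃ N, ∀ i, a i ∈ Dseq N := by
      choose idx hidx using fun i => (Submodule.mem_iSup_of_chain Dch (a i)).1 (ha i).2
      exact ⟨Finset.univ.sup idx, fun i =>
        hmono (Finset.le_sup (Finset.mem_univ i)) (hidx i)⟩
    obtain ⟨N, hN⟩ := hlev
    set w : Sys (Dseq N) := ⟨m, n, r, a, hN⟩ with hw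
    have hcond : (∀ i, w.a i ∈ C) ∧ ∃ x : Fin w.n → B, ∀ i, ∑ j, w.r i j • x j = w.a i :=
      ⟨fun i => (ha i).1, hsol⟩
    have hspec : (∀ j, sol2 hC w j ∈ C) ∧ ∀ i, ∑ j, w.r i j • sol2 hC w j = w.a i := by
      rw [sol2, dif_pos hcond]
      exact (hC w.m w.n w.r w.a hcond.1 hcond.2).choose_spec
    refine ⟨sol2 hC w, fun j => ⟨hspec.1 j, le_iSup Dseq (N + 1) ?_⟩, hspec.2⟩
    rw [hsucc N]
    exact sol2_mem_stepSub hC w j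
  · -- C ⊔ D is pure
    intro m n r ev hev hsol
    obtain ⟨b, hb⟩ := hsol
    -- decompose the constants
    have hdec : ∀ i, ∃ c ∈ C, ∃ d ∈ (⨆ k, Dseq k : Submodule R B), c + d = ev i := by
      intro i
      exact Submodule.mem_sup.1 (hev i)
    choose c hcC d hdD hcd using hdec
    have hlev : ∃ N, ∀ i, d i ∈ Dseq N := by
      choose idx hidx using fun i => (Submodule.mem_iSup_of_chain Dch (d i)).1 (hdD i)
      exact ⟨Finset.univ.sup idx, fun i =>
        hmono (Finset.le_sup (Finset.mem_univ i)) (hidx i)⟩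
    obtain ⟨N, hN⟩ := hlev
    set w : Sys (Dseq N) := ⟨m, n, r, d, hN⟩ with hw
    have hcond : ∃ x : Fin w.n → B, ∃ c' : Fin w.m → B, (∀ i, c' i ∈ C) ∧
        ∀ i, ∑ j, w.r i j • x j = w.a i + c' i := by
      refine ⟨b, c, hcC, fun i => ?_⟩
      rw [hb i, ← hcd i]
      abel
    have hspec : ∃ c' : Fin w.m → B, (∀ i, c' i ∈ C) ∧
        ∀ i, ∑ j, w.r i j • sol3 C w j = w.a i + c' i := by
      rw [sol3, dif_pos hcond]
      exact hcond.choose_spec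
    obtain ⟨c'', hc''C, hc''⟩ := hspec
    have hsolmem : ∀ j, sol3 C w j ∈ Dseq (N + 1) := by
      intro j
      rw [hsucc N]
      exact sol3_mem_stepSub hC w j
    have hc''D : ∀ i, c'' i ∈ Dseq (N + 1) := by
      intro i
      have : c'' i = ∑ j, w.r i j • sol3 C w j - w.a i := by
        rw [hc'' i]; abel
      rw [this]
      exact sub_mem (Submodule.sum_mem _ (fun j _ =>
        Submodule.smul_mem _ _ (hsolmem j))) (hmono (Nat.le_succ N) (hN i))
    -- second system with constants in C
    have hsol2 : ∃ y : Fin n → B, ∀ i, ∑ j, r i j • y j = c i - c'' i := by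
      refine ⟨fun j => b j - sol3 C w j, fun i => ?_⟩
      have h1 : ∑ j, r i j • (b j - sol3 C w j) =
          (∑ j, r i j • b j) - ∑ j, r i j • sol3 C w j := by
        rw [← Finset.sum_sub_distrib]
        congr 1; funext j; rw [smul_sub]
      rw [h1, hb i, hc'' i, ← hcd i]
      show c i + d i - (d i + c'' i) = c i - c'' i
      abel
    obtain ⟨y, hymem, hy⟩ := hC m n r (fun i => c i - c'' i)
      (fun i => sub_mem (hcC i) (hc''C i)) hsol2
    refine ⟨fun j => y j + sol3 C w j, fun j => ?_, fun i => ?_⟩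
    · exact add_mem (Submodule.mem_sup_left (hymem j))
        (Submodule.mem_sup_right (le_iSup Dseq (N + 1) (hsolmem j)))
    · have h1 : ∑ j, r i j • (y j + sol3 C w j) =
          (∑ j, r i j • y j) + ∑ j, r i j • sol3 C w j := by
        rw [← Finset.sum_add_distrib]
        congr 1; funext j; rw [smul_add]
      rw [h1, hy i, hc'' i]
      show c i - c'' i + (d i + c'' i) = ev i
      rw [← hcd i]
      abel

end Construction

theorem stmt12 (R : Type u) [CommRing R] (F : Type u) [AddCommGroup F] [Module R F]
    (hF : Module.Flat R F) :
    FlatCotorsion R F ↔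
      ∀ (A B : Type u) [AddCommGroup A] [Module R A] [AddCommGroup B] [Module R B],
        Module.Flat R A → Module.Flat R B →
        Cardinal.mk A ≤ max (Cardinal.mk R) Cardinal.aleph0 →
        Cardinal.mk B ≤ max (Cardinal.mk R) Cardinal.aleph0 →
        ∀ f : A →ₗ[R] B, IsPureEmbedding f →
        ∀ g : A →ₗ[R] F, ∃ h : B →ₗ[R] F, h.comp f = g := by
  constructor
  · intro hco A B _ _ _ _ flA flB _ _ f hf g
    exact hco A B flA flB f hf g
  · intro hsmall A B _ _ _ _ flA flB f hf g
    classical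
    let S : Set (B →ₗ.[R] F) := {q | LinearMap.range f ≤ q.domain ∧ IsPureSubmodule q.domain ∧
      ∀ (a : A) (hm : f a ∈ q.domain), q ⟨f a, hm⟩ = g a}
    let e := LinearEquiv.ofInjective f hf.1
    let q₀ : B →ₗ.[R] F := ⟨LinearMap.range f, g.comp (e.symm.toLinearMap)⟩
    have hq₀ : q₀ ∈ S := by
      refine ⟨le_rfl, hf.2, ?_⟩
      intro a hm
      show g (e.symm ⟨f a, hm⟩) = g a
      have he : e a = ⟨f a, hm⟩ := by apply Subtype.ext; rfl
      rw [← he, LinearEquiv.symm_apply_apply]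
    have hchain : ∀ c ⊆ S, IsChain (· ≤ ·) c → ∀ y ∈ c, ∃ ub ∈ S, ∀ z ∈ c, z ≤ ub := by
      intro c hcS hch y hyc
      have hdir : DirectedOn (· ≤ ·) c := hch.directedOn
      refine ⟨LinearPMap.sSup c hdir, ⟨?_, ?_, ?_⟩, fun z hz => LinearPMap.le_sSup hdir hz⟩
      · exact le_trans (hcS hyc).1 (LinearPMap.le_sSup hdir hyc).1
      · show IsPureSubmodule (LinearPMap.sSup c hdir).domain
        have hdom : (LinearPMap.sSup c hdir).domain = sSup (LinearPMap.domain '' c) := rfl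
        rw [hdom]
        have hne : (LinearPMap.domain '' c).Nonempty := ⟨y.domain, Set.mem_image_of_mem _ hyc⟩
        have : Nonempty ↥(LinearPMap.domain '' c) := hne.to_subtype
        have hdir2 : DirectedOn (· ≤ ·) (LinearPMap.domain '' c) :=
          directedOn_image.2 (hdir.mono @(LinearPMap.domain_mono.monotone))
        rw [sSup_eq_iSup']
        apply isPureSubmodule_iSup (directedOn_iff_directed.mp hdir2)
        rintro ⟨p, hp⟩
        obtain ⟨z, hzc, rfl⟩ := hp
        exact (hcS hzc).2.1
      · intro a hm
        have hmy : f a ∈ y.domain := (hcS hyc).1 (LinearMap.mem_range_self f a)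
        have hle := LinearPMap.le_sSup hdir hyc
        have heq := hle.2 (x := ⟨f a, hmy⟩) (y := ⟨f a, hm⟩) rfl
        rw [← heq]
        exact (hcS hyc).2.2 a hmy
    obtain ⟨q, -, hqmem, hqmax⟩ := zorn_le_nonempty₀ S hchain q₀ hq₀
    by_cases htop : q.domain = ⊤
    · refine ⟨q.toFun.comp (LinearMap.codRestrict q.domain LinearMap.id
        (fun b => htop ▸ Submodule.mem_top)), ?_⟩
      ext a
      exact hqmem.2.2 a _
    · obtain ⟨b₀, hb₀⟩ : ∃ b₀ : B, b₀ ∉ q.domain := by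
        by_contra hcon
        push_neg at hcon
        exact htop (eq_top_iff.2 fun x _ => hcon x)
      obtain ⟨D, hb₀D, hDcard, hDpure, hCDpure, hCupDpure⟩ :=
        exists_pure_cover hqmem.2.1 b₀
      set C := q.domain with hCdef
      have hDflat : Module.Flat R D := flat_of_pure _ hDpure
      have hCDflat : Module.Flat R ↥(C ⊓ D) := flat_of_pure _ hCDpure
      have hCDcard : #↥(C ⊓ D) ≤ max #R ℵ₀ :=
        le_trans (Cardinal.mk_le_of_injective
          (Submodule.inclusion_injective (inf_le_right : C ⊓ D ≤ D))) hDcard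
      have hincl : IsPureEmbedding (Submodule.inclusion (inf_le_right : C ⊓ D ≤ D)) :=
        isPureEmbedding_inclusion _ hCDpure
      obtain ⟨h₁, hh₁⟩ := hsmall ↥(C ⊓ D) ↥D hCDflat hDflat hCDcard hDcard
        (Submodule.inclusion inf_le_right) hincl
        (q.toFun.comp (Submodule.inclusion (inf_le_left : C ⊓ D ≤ C)))
      let q₁ : B →ₗ.[R] F := ⟨D, h₁⟩
      have Hagree : ∀ (x : q.domain) (yd : q₁.domain), (x : B) = yd → q x = q₁ yd := by
        intro x yd hxy
        have hmem : (x : B) ∈ C ⊓ D := ⟨x.2, hxy ▸ yd.2⟩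
        have hz := LinearMap.congr_fun hh₁ (⟨(x : B), hmem⟩ : ↥(C ⊓ D))
        -- hz : h₁ (inclusion _ ⟨x, hmem⟩) = q.toFun (inclusion _ ⟨x, hmem⟩)
        have h1 : q₁ yd = h₁ yd := rfl
        have h2 : yd = Submodule.inclusion (inf_le_right : C ⊓ D ≤ D) ⟨(x : B), hmem⟩ :=
          Subtype.ext hxy.symm
        have h3 : x = Submodule.inclusion (inf_le_left : C ⊓ D ≤ C) ⟨(x : B), hmem⟩ :=
          Subtype.ext rfl
        simp only [LinearMap.comp_apply] at hz
        rw [h1, h2]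
        conv_lhs => rw [h3]
        exact hz.symm
      let q' := q.sup q₁ Hagree
      have hdom' : q'.domain = C ⊔ D := rfl
      have hq'S : q' ∈ S := by
        refine ⟨?_, ?_, ?_⟩
        · exact le_trans hqmem.1 (le_trans le_sup_left (le_of_eq hdom'.symm))
        · show IsPureSubmodule q'.domain
          rw [hdom']
          exact hCupDpure
        · intro a hm
          have hmC : f a ∈ C := hqmem.1 (LinearMap.mem_range_self f a)
          have hle := q.left_le_sup q₁ Hagree
          have heq := hle.2 (x := ⟨f a, hmC⟩) (y := ⟨f a, hm⟩) rfl
          rw [← heq]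
          exact hqmem.2.2 a hmC
      have hle' := hqmax hq'S (q.left_le_sup q₁ Hagree)
      have hb' : b₀ ∈ q'.domain := by
        rw [hdom']
        exact Submodule.mem_sup_right hb₀D
      exact absurd (hle'.1 hb') hb₀
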